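/- Let θ₀ > 0, let T be a positive integer, and let β₁, …, β_T ∈ (0,1). Define α_t = 1 − β_t, ᾱ_t = ∏_{i=1}^t α_i, k_t = β_t/(α_t·θ₀²), θ_t = sqrt(ᾱ_t)·θ₀, and k̄_t = ∑_{i=1}^t k_i. Let x₀ ∈ ℝ, let g₁, …, g_T be mutually independent real random variables with g_t ~ Γ(k_t, θ_t), and define recursively x_t = sqrt(1 − β_t)·x_{t−1} + (g_t − E[g_t]) for t = 1, …, T. Then for every t ∈ {1, …, T}, x_t has the same distribution as sqrt(ᾱ_t)·x₀ + (ḡ_t − E[ḡ_t]), where ḡ_t ~ Γ(k̄_t, θ_t); equivalently, the distribution of x_t is the pushforward of the Gamma measure with shape k̄_t and scale θ_t under the map y ↦ sqrt(ᾱ_t)·x₀ + y − k̄_t·θ_t. -/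

import Mathlib

open MeasureTheory ProbabilityTheory Real Set
open scoped ENNReal

section GammaAuxLemmas

lemma gammaAux_beta_intervalIntegrable {a b z : ℝ} (ha : 0 < a) (hb : 0 < b) (hz : 0 < z) :
    IntervalIntegrable (fun x => x ^ (a-1) * (z - x) ^ (b-1)) volume 0 z := by
  have h1 : IntervalIntegrable (fun x => x ^ (a-1) * (z - x) ^ (b-1)) volume 0 (z/2) := by
    apply (intervalIntegral.intervalIntegrable_rpow' (by linarith)).mul_continuousOn
    intro x hx
    rw [uIcc_of_le (by linarith)] at hx
    exact ((continuous_const.sub continuous_id).continuousAt.rpow_const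
      (Or.inl (by simp; nlinarith [hx.2]))).continuousWithinAt
  have h2 : IntervalIntegrable (fun x => x ^ (a-1) * (z - x) ^ (b-1)) volume (z/2) z := by
    have : IntervalIntegrable (fun x => (z - x) ^ (b-1)) volume (z/2) z := by
      have := (intervalIntegral.intervalIntegrable_rpow' (r := b-1) (a := z - z/2)
        (b := z - z) (by linarith)).comp_sub_left z
      simpa using this
    apply this.continuousOn_mul
    intro x hx
    rw [uIcc_of_le (by linarith)] at hx
    exact (continuousAt_id.rpow_const
      (Or.inl (by simp only [id_eq]; nlinarith [hx.1]))).continuousWithinAt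
  exact h1.trans h2

lemma gammaAux_integral_beta_scaled {a b z : ℝ} (ha : 0 < a) (hb : 0 < b) (hz : 0 < z) :
    ∫ x in (0:ℝ)..z, x ^ (a-1) * (z - x) ^ (b-1)
      = Real.Gamma a * Real.Gamma b / Real.Gamma (a+b) * z ^ (a+b-1) := by
  have h1 := Complex.betaIntegral_scaled (a:ℂ) (b:ℂ) hz
  have h2 : ∫ x in (0:ℝ)..z, (x:ℂ) ^ ((a:ℂ) - 1) * ((z:ℂ) - x) ^ ((b:ℂ) - 1)
      = ((∫ x in (0:ℝ)..z, x ^ (a-1) * (z - x) ^ (b-1) : ℝ) : ℂ) := by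
    rw [← intervalIntegral.integral_ofReal]
    rw [intervalIntegral.integral_of_le hz.le, intervalIntegral.integral_of_le hz.le]
    refine setIntegral_congr_fun measurableSet_Ioc fun x hx => ?_
    rw [Complex.ofReal_mul, Complex.ofReal_cpow hx.1.le,
      Complex.ofReal_cpow (by linarith [hx.2] : (0:ℝ) ≤ z - x)]
    push_cast
    ring
  have hbeta : Complex.betaIntegral (a:ℂ) (b:ℂ)
      = ((Real.Gamma a * Real.Gamma b / Real.Gamma (a+b) : ℝ) : ℂ) := by
    have h3 := Complex.Gamma_mul_Gamma_eq_betaIntegral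
      (s := (a:ℂ)) (t := (b:ℂ)) (by simpa using ha) (by simpa using hb)
    rw [← Complex.ofReal_add, Complex.Gamma_ofReal, Complex.Gamma_ofReal,
      Complex.Gamma_ofReal] at h3
    have hgne : ((Real.Gamma (a+b) : ℂ)) ≠ 0 :=
      Complex.ofReal_ne_zero.mpr (Real.Gamma_pos_of_pos (by linarith)).ne'
    rw [Complex.ofReal_div, Complex.ofReal_mul, eq_div_iff hgne, mul_comm, ← h3]
  rw [h2, hbeta, show ((a:ℂ) + b - 1) = ((a+b-1:ℝ):ℂ) by push_cast; ring,
    ← Complex.ofReal_cpow hz.le, ← Complex.ofReal_mul] at h1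
  exact Complex.ofReal_inj.mp h1 |>.trans (mul_comm _ _)

lemma gammaAux_lintegral_gammaPDF_conv {a b r : ℝ} (ha : 0 < a) (hb : 0 < b) (hr : 0 < r)
    {z : ℝ} (hz : z ≠ 0) :
    ∫⁻ x, gammaPDF a r x * gammaPDF b r (z - x) = gammaPDF (a+b) r z := by
  rcases lt_or_gt_of_ne hz with hneg | hpos
  · rw [gammaPDF_of_neg hneg, ← lintegral_zero]
    refine lintegral_congr fun x => ?_
    rcases le_or_gt 0 x with hx | hx
    · rw [gammaPDF_of_neg (x := z - x) (by linarith), mul_zero]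
    · rw [gammaPDF_of_neg hx, zero_mul]
  · have hsupp : ∀ x, x ∉ Icc (0:ℝ) z → gammaPDF a r x * gammaPDF b r (z - x) = 0 := by
      intro x hx
      rcases lt_or_ge x 0 with h | h
      · rw [gammaPDF_of_neg h, zero_mul]
      · have hzx : z < x := by
          by_contra h'
          exact hx ⟨h, not_lt.mp h'⟩
        rw [gammaPDF_of_neg (x := z - x) (by linarith), mul_zero]
    have hind : (fun x => gammaPDF a r x * gammaPDF b r (z - x))
        = (Icc (0:ℝ) z).indicator (fun x => gammaPDF a r x * gammaPDF b r (z - x)) :=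
      (Set.indicator_eq_self.2 (Function.support_subset_iff'.2 hsupp)).symm
    rw [hind, lintegral_indicator measurableSet_Icc]
    have hcong : ∀ x ∈ Icc (0:ℝ) z,
        gammaPDF a r x * gammaPDF b r (z - x)
          = ENNReal.ofReal ((r ^ a / Real.Gamma a * r ^ b / Real.Gamma b * Real.exp (-(r * z)))
              * (x ^ (a-1) * (z - x) ^ (b-1))) := by
      intro x hx
      rw [gammaPDF_of_nonneg hx.1, gammaPDF_of_nonneg (by linarith [hx.2] : (0:ℝ) ≤ z - x),
        ← ENNReal.ofReal_mul (mul_nonneg (mul_nonneg (by positivity)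
          (Real.rpow_nonneg hx.1 _)) (Real.exp_nonneg _))]
      congr 1
      rw [show (-(r*z)) = -(r*x) + -(r*(z-x)) by ring, Real.exp_add]
      ring
    rw [setLIntegral_congr_fun measurableSet_Icc hcong]
    have hInt : IntegrableOn (fun x =>
        (r ^ a / Real.Gamma a * r ^ b / Real.Gamma b * Real.exp (-(r * z)))
          * (x ^ (a-1) * (z - x) ^ (b-1))) (Icc (0:ℝ) z) volume := by
      rw [integrableOn_Icc_iff_integrableOn_Ioc]
      exact ((gammaAux_beta_intervalIntegrable ha hb hpos).1.const_mul _)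
    rw [← ofReal_integral_eq_lintegral_ofReal hInt
      ((ae_restrict_iff' measurableSet_Icc).2 (ae_of_all _ fun x hx => mul_nonneg (by positivity)
        (mul_nonneg (Real.rpow_nonneg hx.1 _) (Real.rpow_nonneg (by linarith [hx.2]) _))))]
    rw [integral_Icc_eq_integral_Ioc, ← intervalIntegral.integral_of_le hpos.le,
      intervalIntegral.integral_const_mul, gammaAux_integral_beta_scaled ha hb hpos,
      gammaPDF_of_nonneg hpos.le]
    congr 1
    have g1 := (Real.Gamma_pos_of_pos ha).ne'
    have g2 := (Real.Gamma_pos_of_pos hb).ne'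
    have g3 := (Real.Gamma_pos_of_pos (by linarith : (0:ℝ) < a + b)).ne'
    rw [show r ^ (a+b) = r ^ a * r ^ b from Real.rpow_add hr a b]
    field_simp

lemma gammaAux_map_add_prod_withDensity (f g : ℝ → ℝ≥0∞) (hf : Measurable f)
    (hg : Measurable g) :
    Measure.map (fun p : ℝ × ℝ => p.1 + p.2)
        ((volume.withDensity f).prod (volume.withDensity g))
      = volume.withDensity (fun z => ∫⁻ x, f x * g (z - x)) := by
  ext s hs
  rw [Measure.map_apply (show Measurable (fun p : ℝ × ℝ => p.1 + p.2) from measurable_fst.add measurable_snd) hs,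
    withDensity_apply _ hs,
    Measure.prod_apply ((show Measurable (fun p : ℝ × ℝ => p.1 + p.2) from measurable_fst.add measurable_snd) hs)]
  have step1 : ∀ x : ℝ, (volume.withDensity g) (Prod.mk x ⁻¹' ((fun p : ℝ × ℝ => p.1 + p.2) ⁻¹' s))
      = ∫⁻ z in s, g (z - x) := by
    intro x
    have hpre : (Prod.mk x ⁻¹' ((fun p : ℝ × ℝ => p.1 + p.2) ⁻¹' s)) = (fun y => x + y) ⁻¹' s := rfl
    rw [hpre, withDensity_apply _ (measurable_const_add x hs)]
    have hmp : MeasurePreserving (fun y : ℝ => x + y) volume volume :=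
      measurePreserving_add_left volume x
    have := hmp.setLIntegral_comp_preimage_emb (measurableEmbedding_addLeft x)
      (fun z => g (z - x)) s
    simpa using this
  simp_rw [step1]
  have hmeas1 : Measurable fun x : ℝ => ∫⁻ z in s, g (z - x) := by
    apply Measurable.lintegral_prod_right (f := fun x z => g (z - x))
    exact hg.comp (measurable_snd.sub measurable_fst)
  rw [lintegral_withDensity_eq_lintegral_mul _ hf hmeas1]
  have swap : (∫⁻ x, f x * ∫⁻ z in s, g (z - x)) = ∫⁻ z in s, ∫⁻ x, f x * g (z - x) := by
    have h1 : (∫⁻ x, f x * ∫⁻ z in s, g (z - x))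
        = ∫⁻ x, ∫⁻ z in s, f x * g (z - x) := by
      refine lintegral_congr fun x => ?_
      exact (lintegral_const_mul (f x) (hg.comp (measurable_id.sub_const x))).symm
    rw [h1]
    exact lintegral_lintegral_swap
      (((hf.comp measurable_fst).mul (hg.comp (measurable_snd.sub measurable_fst))).aemeasurable)
  exact swap

lemma gammaAux_measurable_gammaPDF (a r : ℝ) : Measurable (gammaPDF a r) :=
  ENNReal.measurable_ofReal.comp (measurable_gammaPDFReal a r)

lemma gammaAux_gammaMeasure_conv {a b r : ℝ} (ha : 0 < a) (hb : 0 < b) (hr : 0 < r) :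
    Measure.map (fun p : ℝ × ℝ => p.1 + p.2)
        ((gammaMeasure a r).prod (gammaMeasure b r)) = gammaMeasure (a+b) r := by
  rw [gammaMeasure, gammaMeasure, gammaMeasure,
    gammaAux_map_add_prod_withDensity _ _ (gammaAux_measurable_gammaPDF a r)
      (gammaAux_measurable_gammaPDF b r)]
  refine withDensity_congr_ae ?_
  have h0 : {z : ℝ | ¬ (∫⁻ x, gammaPDF a r x * gammaPDF b r (z - x)) = gammaPDF (a+b) r z}
      ⊆ {0} := by
    intro z hz
    by_contra h
    exact hz (gammaAux_lintegral_gammaPDF_conv ha hb hr (by simpa using h))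
  exact measure_mono_null h0 (measure_singleton 0)

lemma gammaAux_map_const_mul_gammaMeasure {a r c : ℝ} (ha : 0 < a) (hr : 0 < r) (hc : 0 < c) :
    Measure.map (fun x : ℝ => c * x) (gammaMeasure a r) = gammaMeasure a (r / c) := by
  ext s hs
  rw [Measure.map_apply (measurable_const_mul c) hs, gammaMeasure,
    withDensity_apply _ ((measurable_const_mul c) hs)]
  have key : ∫⁻ x in (fun x : ℝ => c * x) ⁻¹' s, gammaPDF a r x
      = ∫⁻ y in s, ENNReal.ofReal (gammaPDFReal a r (c⁻¹ * y))
          ∂(Measure.map (fun x => c * x) volume) := by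
    rw [setLIntegral_map (f := fun y => ENNReal.ofReal (gammaPDFReal a r (c⁻¹ * y))) hs
      (by exact (((measurable_gammaPDFReal a r).comp (measurable_const_mul c⁻¹)).ennreal_ofReal))
      (measurable_const_mul c)]
    refine setLIntegral_congr_fun (measurable_const_mul c hs) (fun x _ => ?_) |>.symm
    rw [inv_mul_cancel_left₀ hc.ne']
    rfl
  rw [key, Real.map_volume_mul_left hc.ne', Measure.restrict_smul, lintegral_smul_measure]
  rw [smul_eq_mul, gammaMeasure, withDensity_apply _ hs, ← lintegral_const_mul _
    (by exact (((measurable_gammaPDFReal a r).comp (measurable_const_mul c⁻¹)).ennreal_ofReal))]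
  refine setLIntegral_congr_fun hs (fun y _ => ?_)
  simp only [gammaPDF_eq]
  rcases le_or_gt 0 y with hy | hy
  · rw [gammaPDFReal, if_pos (by positivity : (0:ℝ) ≤ c⁻¹ * y),
      ← ENNReal.ofReal_mul (abs_nonneg _)]
    congr 1
    have hkey : c⁻¹ * (c⁻¹) ^ (a - 1) = (c ^ a)⁻¹ := by
      rw [← Real.inv_rpow hc.le, show a = 1 + (a - 1) by ring,
        Real.rpow_add' (inv_pos.2 hc).le (by simpa using ha.ne'), Real.rpow_one]
      ring_nf
    have e3 : r * (c⁻¹ * y) = r / c * y := by field_simp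
    calc |c⁻¹| * (r ^ a / Real.Gamma a * (c⁻¹ * y) ^ (a - 1) * Real.exp (-(r * (c⁻¹ * y))))
        = (c⁻¹ * (c⁻¹) ^ (a - 1)) * (r ^ a / Real.Gamma a * y ^ (a - 1)
            * Real.exp (-(r / c * y))) := by
          rw [abs_of_pos (inv_pos.2 hc), Real.mul_rpow (inv_pos.2 hc).le hy, e3]; ring
      _ = (r / c) ^ a / Real.Gamma a * y ^ (a - 1) * Real.exp (-(r / c * y)) := by
          rw [hkey, Real.div_rpow hr.le hc.le]; ring
      _ = if 0 ≤ y then (r / c) ^ a / Real.Gamma a * y ^ (a - 1) * Real.exp (-(r / c * y))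
            else 0 := (if_pos hy).symm
  · rw [gammaPDFReal, if_neg (by intro h; nlinarith [inv_pos.2 hc])]
    rw [if_neg (not_le.2 hy)]
    simp

lemma gammaAux_integral_id_gammaMeasure {a r : ℝ} (ha : 0 < a) (hr : 0 < r) :
    ∫ x, x ∂(gammaMeasure a r) = a / r := by
  have hnn : 0 ≤ᵐ[gammaMeasure a r] id := by
    rw [Filter.EventuallyLE, ae_iff]
    have hsub : {x : ℝ | ¬ (0:ℝ) ≤ id x} ⊆ Iio 0 := fun x hx => not_le.1 hx
    refine measure_mono_null hsub ?_
    rw [gammaMeasure, withDensity_apply _ measurableSet_Iio]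
    simpa using lintegral_gammaPDF_of_nonpos (le_refl (0:ℝ)) (a := a) (r := r)
  rw [show (∫ x, x ∂(gammaMeasure a r)) = ∫ x, id x ∂(gammaMeasure a r) from rfl,
    integral_eq_lintegral_of_nonneg_ae hnn aestronglyMeasurable_id]
  have h1 : ∫⁻ x, ENNReal.ofReal (id x) ∂(gammaMeasure a r)
      = ∫⁻ x, gammaPDF a r x * ENNReal.ofReal x := by
    rw [gammaMeasure, lintegral_withDensity_eq_lintegral_mul _ (gammaAux_measurable_gammaPDF a r)
      (by exact ENNReal.measurable_ofReal.comp measurable_id)]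
    rfl
  have hsupp : ∀ x : ℝ, x ∉ Ioi (0:ℝ) → gammaPDF a r x * ENNReal.ofReal x = 0 := by
    intro x hx
    have hx' : x ≤ 0 := not_lt.1 hx
    rcases lt_or_eq_of_le hx' with h | h
    · rw [gammaPDF_of_neg h, zero_mul]
    · rw [h, ENNReal.ofReal_zero, mul_zero]
  have h2 : (∫⁻ x, gammaPDF a r x * ENNReal.ofReal x)
      = ∫⁻ x in Ioi (0:ℝ),
          ENNReal.ofReal (r ^ a / Real.Gamma a * (x ^ (a-1) * Real.exp (-(r*x)) * x)) := by
    rw [show (fun x => gammaPDF a r x * ENNReal.ofReal x)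
        = (Ioi (0:ℝ)).indicator (fun x => gammaPDF a r x * ENNReal.ofReal x) from
      (Set.indicator_eq_self.2 (Function.support_subset_iff'.2 hsupp)).symm,
      lintegral_indicator measurableSet_Ioi]
    refine setLIntegral_congr_fun measurableSet_Ioi (fun x hx => ?_)
    rw [gammaPDF_of_nonneg (le_of_lt hx), ← ENNReal.ofReal_mul (mul_nonneg (mul_nonneg
      (by positivity) (Real.rpow_nonneg (le_of_lt hx) _)) (Real.exp_nonneg _))]
    congr 1
    ring
  have hint : IntegrableOn
      (fun x : ℝ => r ^ a / Real.Gamma a * (x ^ (a-1) * Real.exp (-(r*x)) * x))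
      (Ioi (0:ℝ)) volume := by
    apply Integrable.const_mul
    have := integrableOn_rpow_mul_exp_neg_mul_rpow (p := 1) (s := a) (b := r)
      (by linarith) zero_lt_one hr
    apply this.congr_fun ?_ measurableSet_Ioi
    intro x hx
    have hxpos : (0:ℝ) < x := hx
    dsimp only
    rw [Real.rpow_one, show a = (a - 1) + 1 by ring, Real.rpow_add hxpos, Real.rpow_one]
    ring
  rw [h1, h2, ← ofReal_integral_eq_lintegral_ofReal hint
    ((ae_restrict_iff' measurableSet_Ioi).2 (ae_of_all _ fun x hx => by
      have hx' : (0:ℝ) < x := hx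
      positivity))]
  have h3 : ∫ x in Ioi (0:ℝ), r ^ a / Real.Gamma a * (x ^ (a-1) * Real.exp (-(r*x)) * x)
      = a / r := by
    rw [integral_const_mul]
    have hcong : ∀ x ∈ Ioi (0:ℝ), x ^ (a-1) * Real.exp (-(r*x)) * x
        = x ^ ((a+1)-1) * Real.exp (-(r*x)) := by
      intro x hx
      have hxpos : (0:ℝ) < x := hx
      rw [show (a+1)-1 = (a-1)+1 by ring, Real.rpow_add hxpos, Real.rpow_one]
      ring
    rw [setIntegral_congr_fun measurableSet_Ioi hcong,
      integral_rpow_mul_exp_neg_mul_Ioi (by linarith) hr,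
      Real.Gamma_add_one ha.ne']
    rw [Real.rpow_add' (by positivity) (by simpa using (by linarith : a + 1 ≠ 0)), Real.rpow_one]
    have hΓ : Real.Gamma a ≠ 0 := (Real.Gamma_pos_of_pos ha).ne'
    rw [Real.div_rpow zero_le_one hr.le, Real.one_rpow]
    field_simp
  rw [h3, ENNReal.toReal_ofReal (by positivity)]

end GammaAuxLemmas

/-- Closed form of the Gamma diffusion process.  Let `θ₀ > 0`, `T ≥ 1`,
`β₁, …, β_T ∈ (0,1)`, `α_t = 1 − β_t`, `ᾱ_t = ∏_{i=1}^t α_i`, `k_t = β_t/(α_t·θ₀²)`,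
`θ_t = sqrt(ᾱ_t)·θ₀` and `k̄_t = ∑_{i=1}^t k_i`.  Let `x₀ ∈ ℝ`, let `g₁, …, g_T` be
mutually independent with `g_t ~ Γ(k_t, θ_t)` (shape/scale parametrization, i.e. rate
`1/θ_t`), and define `x_t = sqrt(1 − β_t)·x_{t−1} + (g_t − E[g_t])`.  Then for every
`t ∈ {1, …, T}`, the distribution of `x_t` is the pushforward of the Gamma measure with
shape `k̄_t` and scale `θ_t` under `y ↦ sqrt(ᾱ_t)·x₀ + y − k̄_t·θ_t`, i.e. `x_t` has the
same law as `sqrt(ᾱ_t)·x₀ + (ḡ_t − E[ḡ_t])` with `ḡ_t ~ Γ(k̄_t, θ_t)`. -/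
theorem gamma_diffusion_closed_form {Ω : Type*} [MeasureSpace Ω]
    [IsProbabilityMeasure (ℙ : Measure Ω)]
    (θ₀ : ℝ) (hθ₀ : 0 < θ₀) (T : ℕ) (hT : 0 < T)
    (β : ℕ → ℝ) (hβ : ∀ t, 1 ≤ t → t ≤ T → β t ∈ Set.Ioo (0 : ℝ) 1)
    (α : ℕ → ℝ) (hα : ∀ t, α t = 1 - β t)
    (αbar : ℕ → ℝ) (hαbar : ∀ t, αbar t = ∏ i ∈ Finset.Icc 1 t, α i)
    (k : ℕ → ℝ) (hk : ∀ t, k t = β t / (α t * θ₀ ^ 2))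
    (θ : ℕ → ℝ) (hθ : ∀ t, θ t = Real.sqrt (αbar t) * θ₀)
    (kbar : ℕ → ℝ) (hkbar : ∀ t, kbar t = ∑ i ∈ Finset.Icc 1 t, k i)
    (x₀ : ℝ) (g : ℕ → Ω → ℝ) (hgm : ∀ t, Measurable (g t))
    (hg : ∀ t, 1 ≤ t → t ≤ T → Measure.map (g t) ℙ = gammaMeasure (k t) (θ t)⁻¹)
    (hgindep : iIndepFun g ℙ)
    (x : ℕ → Ω → ℝ) (hx0 : x 0 = fun _ => x₀)
    (hxrec : ∀ t, 1 ≤ t → t ≤ T →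
      x t = fun ω => Real.sqrt (1 - β t) * x (t - 1) ω + (g t ω - ∫ ω', g t ω' ∂ℙ)) :
    ∀ t, 1 ≤ t → t ≤ T →
      Measure.map (x t) ℙ =
        Measure.map (fun y : ℝ => Real.sqrt (αbar t) * x₀ + y - kbar t * θ t)
          (gammaMeasure (kbar t) (θ t)⁻¹) := by
  -- basic positivity facts
  have hαpos : ∀ i, 1 ≤ i → i ≤ T → 0 < α i := fun i h1 h2 => by
    rw [hα]; linarith [(hβ i h1 h2).2]
  have hαbarpos : ∀ s, s ≤ T → 0 < αbar s := by
    intro s hs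
    rw [hαbar]
    refine Finset.prod_pos fun i hi => ?_
    rw [Finset.mem_Icc] at hi
    exact hαpos i hi.1 (le_trans hi.2 hs)
  have hkpos : ∀ i, 1 ≤ i → i ≤ T → 0 < k i := fun i h1 h2 => by
    rw [hk]
    exact div_pos (hβ i h1 h2).1 (mul_pos (hαpos i h1 h2) (by positivity))
  have hkbarpos : ∀ s, 1 ≤ s → s ≤ T → 0 < kbar s := by
    intro s h1 h2
    rw [hkbar]
    refine Finset.sum_pos (fun i hi => ?_) ⟨1, Finset.mem_Icc.2 ⟨le_refl 1, h1⟩⟩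
    rw [Finset.mem_Icc] at hi
    exact hkpos i hi.1 (le_trans hi.2 h2)
  have hθpos : ∀ s, s ≤ T → 0 < θ s := fun s hs => by
    rw [hθ]
    exact mul_pos (Real.sqrt_pos.2 (hαbarpos s hs)) hθ₀
  -- mean of g i
  have hmean : ∀ i, 1 ≤ i → i ≤ T → (∫ ω', g i ω' ∂ℙ) = k i * θ i := by
    intro i h1 h2
    have : (∫ ω', g i ω' ∂ℙ) = ∫ y, y ∂(Measure.map (g i) ℙ) :=
      (integral_map (hgm i).aemeasurable aestronglyMeasurable_id).symm
    rw [this, hg i h1 h2,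
      gammaAux_integral_id_gammaMeasure (hkpos i h1 h2) (inv_pos.2 (hθpos i h2)),
      div_eq_mul_inv, inv_inv]
  -- measurability of x
  have hxm : ∀ s, s ≤ T → Measurable (x s) := by
    intro s
    induction s with
    | zero => intro _; rw [hx0]; exact measurable_const
    | succ n ih =>
      intro hsT
      rw [hxrec (n+1) (Nat.le_add_left 1 n) hsT]
      simp only [Nat.add_sub_cancel]
      exact ((measurable_const.mul (ih (by omega))).add ((hgm (n+1)).sub measurable_const))
  -- representation of x s as a function of g on Finset.range t
  have hrep : ∀ t, ∀ s, s < t → s ≤ T →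
      ∃ φ : (↥(Finset.range t) → ℝ) → ℝ,
        Measurable φ ∧ x s = fun ω => φ (fun i => g i ω) := by
    intro t s
    induction s with
    | zero =>
      intro _ _
      exact ⟨fun _ => x₀, measurable_const, hx0⟩
    | succ n ih =>
      intro hlt hsT
      obtain ⟨φ', hφ'm, hφ'⟩ := ih (by omega) (by omega)
      refine ⟨fun v => Real.sqrt (1 - β (n+1)) * φ' v
        + (v ⟨n+1, Finset.mem_range.2 hlt⟩ - ∫ ω', g (n+1) ω' ∂ℙ), ?_, ?_⟩
      · exact (measurable_const.mul hφ'm).add ((measurable_pi_apply _).sub measurable_const)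
      · rw [hxrec (n+1) (Nat.le_add_left 1 n) hsT]
        simp only [Nat.add_sub_cancel, hφ']
  -- independence of x (t-1)-derived variables and g t
  have hindep : ∀ t, 1 ≤ t → t ≤ T → ∀ F : ℝ → ℝ, Measurable F →
      IndepFun (fun ω => F (x (t-1) ω)) (g t) ℙ := by
    intro t h1 h2 F hF
    obtain ⟨φ, hφm, hφ⟩ := hrep t (t-1) (by omega) (by omega)
    have hbase := hgindep.indepFun_finset (Finset.range t) {t}
      (by simp [Finset.disjoint_singleton_right]) hgm
    have := hbase.comp (φ := fun v => F (φ v))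
      (ψ := fun v : (({t} : Finset ℕ) → ℝ) => v ⟨t, Finset.mem_singleton_self t⟩)
      (hF.comp hφm) (measurable_pi_apply (X := fun _ : ({t} : Finset ℕ) => ℝ) _)
    have heq : (fun v : (↥(Finset.range t) → ℝ) => F (φ v))
        ∘ (fun a (i : ↥(Finset.range t)) => g i a) = fun ω => F (x (t-1) ω) := by
      funext ω
      simp only [Function.comp_apply]
      rw [hφ]
    rw [heq] at this
    exact this
  -- the main induction
  intro t ht
  induction t, ht using Nat.le_induction with
  | base =>
    intro h1T
    have hm1 := hmean 1 le_rfl h1T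
    have hx1 : x 1 = (fun y => Real.sqrt (αbar 1) * x₀ + y - kbar 1 * θ 1) ∘ g 1 := by
      rw [hxrec 1 le_rfl h1T]
      funext ω
      simp only [Function.comp_apply, Nat.sub_self, hx0, hm1]
      have hαb1 : αbar 1 = 1 - β 1 := by
        rw [hαbar, Finset.Icc_self, Finset.prod_singleton, hα]
      have hkb1 : kbar 1 = k 1 := by
        rw [hkbar, Finset.Icc_self, Finset.sum_singleton]
      rw [hαb1, hkb1]
      ring
    have hkb1 : kbar 1 = k 1 := by rw [hkbar, Finset.Icc_self, Finset.sum_singleton]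
    rw [hx1, ← Measure.map_map (by fun_prop) (hgm 1), hg 1 le_rfl h1T, hkb1]
  | succ n hn ih =>
    intro hn1T
    have hnT : n ≤ T := by omega
    have ihn := ih hnT
    set c := Real.sqrt (α (n+1)) with hc
    have hcpos : 0 < c := Real.sqrt_pos.2 (hαpos (n+1) (by omega) hn1T)
    have hαbar_succ : αbar (n+1) = αbar n * α (n+1) := by
      rw [hαbar, hαbar, Finset.prod_Icc_succ_top (by omega : 1 ≤ n + 1)]
    have hkbar_succ : kbar (n+1) = kbar n + k (n+1) := by
      rw [hkbar, hkbar, Finset.sum_Icc_succ_top (by omega : 1 ≤ n + 1)]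
    have hsqrt_succ : Real.sqrt (αbar (n+1)) = c * Real.sqrt (αbar n) := by
      rw [hαbar_succ, Real.sqrt_mul (hαbarpos n hnT).le, mul_comm]
    have hθsucc : θ (n+1) = c * θ n := by
      rw [hθ, hθ, hsqrt_succ]; ring
    have hθn1pos : 0 < θ (n+1) := hθpos (n+1) hn1T
    have hθnpos : 0 < θ n := hθpos n hnT
    -- the recentered scaled variable U
    set C : ℝ := Real.sqrt (αbar (n+1)) * x₀ - kbar n * θ (n+1) with hC
    set U : Ω → ℝ := fun ω => c * x (n+1-1) ω - C with hUdef
    have hUm : Measurable U :=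
      (measurable_const.mul (by simpa using hxm n hnT)).sub measurable_const
    have hUlaw : Measure.map U ℙ = gammaMeasure (kbar n) (θ (n+1))⁻¹ := by
      have hU : U = (fun y => c * y - C) ∘ x n := by
        funext ω; simp [hUdef]
      rw [hU, ← Measure.map_map (by fun_prop) (hxm n hnT), ihn,
        Measure.map_map (by fun_prop) (by fun_prop)]
      have hcomp : ((fun y => c * y - C)
          ∘ (fun y : ℝ => Real.sqrt (αbar n) * x₀ + y - kbar n * θ n))
          = fun y : ℝ => c * y := by
        funext y
        simp only [Function.comp_apply, hC, hsqrt_succ, hθsucc]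
        ring
      rw [hcomp, gammaAux_map_const_mul_gammaMeasure (hkbarpos n hn hnT)
        (inv_pos.2 hθnpos) hcpos]
      congr 1
      rw [hθsucc]
      field_simp
    -- independence of U and g (n+1)
    have hIndep : IndepFun U (g (n+1)) ℙ := by
      have := hindep (n+1) (by omega) hn1T (fun y => c * y - C)
        ((measurable_const_mul c).sub measurable_const)
      exact this
    -- law of the sum
    have hpair : Measure.map (fun ω => (U ω, g (n+1) ω)) ℙ
        = (Measure.map U ℙ).prod (Measure.map (g (n+1)) ℙ) :=
      (indepFun_iff_map_prod_eq_prod_map_map hUm.aemeasurable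
        (hgm (n+1)).aemeasurable).1 hIndep
    have hsum : Measure.map (fun ω => U ω + g (n+1) ω) ℙ
        = gammaMeasure (kbar (n+1)) (θ (n+1))⁻¹ := by
      have h1 : (fun ω => U ω + g (n+1) ω)
          = (fun p : ℝ × ℝ => p.1 + p.2) ∘ (fun ω => (U ω, g (n+1) ω)) := rfl
      rw [h1, ← Measure.map_map (show Measurable (fun p : ℝ × ℝ => p.1 + p.2) from measurable_fst.add measurable_snd)
        (hUm.prodMk (hgm (n+1))), hpair, hUlaw, hg (n+1) (by omega) hn1T,
        gammaAux_gammaMeasure_conv (hkbarpos n hn hnT) (hkpos (n+1) (by omega) hn1T)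
          (inv_pos.2 hθn1pos), ← hkbar_succ]
    -- conclude
    have hxn1 : x (n+1) = (fun w => w + (Real.sqrt (αbar (n+1)) * x₀ - kbar (n+1) * θ (n+1)))
        ∘ (fun ω => U ω + g (n+1) ω) := by
      rw [hxrec (n+1) (by omega) hn1T]
      funext ω
      simp only [Function.comp_apply, hUdef, hC, hmean (n+1) (by omega) hn1T, hkbar_succ]
      rw [show (1 : ℝ) - β (n+1) = α (n+1) from (hα (n+1)).symm]
      simp only [Nat.add_sub_cancel]
      ring
    rw [hxn1, ← Measure.map_map (by fun_prop) (show Measurable (fun ω => U ω + g (n+1) ω) from hUm.add (hgm (n+1))), hsum]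
    have : (fun w : ℝ => w + (Real.sqrt (αbar (n+1)) * x₀ - kbar (n+1) * θ (n+1)))
        = fun y : ℝ => Real.sqrt (αbar (n+1)) * x₀ + y - kbar (n+1) * θ (n+1) := by
      funext y; ring
    rw [this]
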